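/- Let N ≥ 1 and let G : 𝒳 → 𝒳 be the chaotic-iterations map G(s,x) = (σ(s), F(s_0, x)). Then G is topologically transitive on the metric space (𝒳, d): for any nonempty open sets U_A and U_B of 𝒳, there exists an integer n₀ > 0 such that G^{n₀}(U_A) ∩ U_B ≠ ∅. -/

import Mathlib

/-- Distance between two strategy sequences:
`dS s t = ∑_{k=0}^∞ |s_k - t_k| / N^(k+1)`. -/
noncomputable def dS (N : ℕ) (s t : ℕ → Fin N) : ℝ :=
  ∑' k : ℕ, |((s k : ℕ) : ℝ) - ((t k : ℕ) : ℝ)| / (N : ℝ) ^ (k + 1)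

/-- Hamming distance between two Boolean vectors. -/
noncomputable def dX (N : ℕ) (x y : Fin N → Bool) : ℝ :=
  ((Finset.univ.filter (fun j => x j ≠ y j)).card : ℝ)

/-- Distance on the phase space `𝒳 = (ℕ → Fin N) × (Fin N → Bool)`. -/
noncomputable def dE (N : ℕ) (p q : (ℕ → Fin N) × (Fin N → Bool)) : ℝ :=
  dS N p.1 q.1 + dX N p.2 q.2

/-- Negate exactly the `k`-th coordinate of the Boolean vector `x`. -/
def Fflip (N : ℕ) (k : Fin N) (x : Fin N → Bool) : Fin N → Bool :=
  fun j => if j = k then !(x j) else x j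

/-- The chaotic-iterations map `G (s, x) = (σ s, F (s 0, x))`. -/
def G (N : ℕ) (p : (ℕ → Fin N) × (Fin N → Bool)) : (ℕ → Fin N) × (Fin N → Bool) :=
  (fun n => p.1 (n + 1), Fflip N (p.1 0) p.2)

/-- A set of the phase space is open for the topology induced by the
metric `dE`. -/
def IsOpenE (N : ℕ) (U : Set ((ℕ → Fin N) × (Fin N → Bool))) : Prop :=
  ∀ p ∈ U, ∃ ε : ℝ, 0 < ε ∧ ∀ q, dE N p q < ε → q ∈ U

def applyL (N : ℕ) (l : List (Fin N)) (x : Fin N → Bool) : Fin N → Bool :=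
  l.foldl (fun y k => Fflip N k y) x

lemma applyL_count (N : ℕ) (l : List (Fin N)) (x : Fin N → Bool) (j : Fin N) :
    applyL N l x j = xor (Nat.bodd (l.count j)) (x j) := by
  induction l generalizing x with
  | nil => simp [applyL]
  | cons k l ih =>
    have h1 : applyL N (k :: l) x = applyL N l (Fflip N k x) := rfl
    rw [h1, ih]
    by_cases h : k = j
    · subst h
      simp [List.count_cons, Fflip, Bool.xor_assoc]
    · have h' : ¬ (j = k) := fun h' => h h'.symm
      simp [List.count_cons, h, h', Fflip]

lemma G_iterate (N : ℕ) (n : ℕ) (s : ℕ → Fin N) (x : Fin N → Bool) :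
    (G N)^[n] (s, x) = (fun k => s (k + n), applyL N ((List.range n).map s) x) := by
  induction n generalizing s x with
  | zero => simp [applyL]
  | succ n ih =>
    rw [Function.iterate_succ_apply]
    show (G N)^[n] (fun k => s (k + 1), Fflip N (s 0) x) = _
    rw [ih]
    have hl : (List.range (n+1)).map s = s 0 :: (List.range n).map (fun k => s (k + 1)) := by
      rw [List.range_succ_eq_map, List.map_cons, List.map_map]
      rfl
    rw [hl]
    have : applyL N (s 0 :: (List.range n).map (fun k => s (k+1))) x
        = applyL N ((List.range n).map (fun k => s (k+1))) (Fflip N (s 0) x) := rfl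
    rw [this]
    refine Prod.ext ?_ rfl
    funext k
    simp [Nat.add_assoc, Nat.add_comm 1 n]

lemma dS_prefix (N : ℕ) (hN : 1 ≤ N) (sA : ℕ → Fin N) (ε : ℝ) (hε : 0 < ε) :
    ∃ m : ℕ, ∀ s : ℕ → Fin N, (∀ k < m, s k = sA k) → dS N sA s < ε := by
  rcases eq_or_lt_of_le hN with h1 | h2
  · refine ⟨0, fun s _ => ?_⟩
    have hsub : Subsingleton (Fin N) := by rw [← h1]; infer_instance
    have : ∀ k, sA k = s k := fun k => Subsingleton.elim _ _
    simp only [dS, this, sub_self, abs_zero, zero_div, tsum_zero]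
    exact hε
  · have hN1 : (1:ℝ) < N := by exact_mod_cast h2
    have hN0 : (0:ℝ) < N := by linarith
    have hr0 : (0:ℝ) ≤ (N:ℝ)⁻¹ := by positivity
    have hr1 : (N:ℝ)⁻¹ < 1 := inv_lt_one_of_one_lt₀ hN1
    set g : ℕ → ℝ := fun k => ((N:ℝ) - 1) * ((N:ℝ)⁻¹) ^ (k+1) with hg
    have hgsum : Summable g := by
      have : Summable (fun k : ℕ => ((N:ℝ)⁻¹) ^ (k+1)) := by
        have := summable_geometric_of_lt_one hr0 hr1
        exact (summable_nat_add_iff 1).mpr this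
      exact this.mul_left _
    have htail : Filter.Tendsto (fun m => ∑' k, g (k + m)) Filter.atTop (nhds 0) :=
      tendsto_sum_nat_add g
    obtain ⟨m, hm⟩ := (htail.eventually_lt_const hε).exists
    refine ⟨m, fun s hs => ?_⟩
    set f : ℕ → ℝ := fun k => |((sA k : ℕ) : ℝ) - ((s k : ℕ) : ℝ)| / (N : ℝ) ^ (k + 1) with hf
    have hfnn : ∀ k, 0 ≤ f k := fun k => by positivity
    have hfg : ∀ k, f k ≤ g k := by
      intro k
      have hb : |((sA k : ℕ) : ℝ) - ((s k : ℕ) : ℝ)| ≤ (N:ℝ) - 1 := by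
        have h1 : ((sA k : ℕ) : ℝ) ≤ (N:ℝ) - 1 := by
          have : (sA k : ℕ) ≤ N - 1 := Nat.le_pred_of_lt (sA k).isLt
          calc ((sA k : ℕ) : ℝ) ≤ ((N - 1 : ℕ) : ℝ) := by exact_mod_cast this
            _ = (N:ℝ) - 1 := by push_cast [Nat.cast_sub hN]; ring
        have h2 : ((s k : ℕ) : ℝ) ≤ (N:ℝ) - 1 := by
          have : (s k : ℕ) ≤ N - 1 := Nat.le_pred_of_lt (s k).isLt
          calc ((s k : ℕ) : ℝ) ≤ ((N - 1 : ℕ) : ℝ) := by exact_mod_cast this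
            _ = (N:ℝ) - 1 := by push_cast [Nat.cast_sub hN]; ring
        have h3 : (0:ℝ) ≤ ((sA k : ℕ) : ℝ) := by positivity
        have h4 : (0:ℝ) ≤ ((s k : ℕ) : ℝ) := by positivity
        rw [abs_le]; constructor <;> linarith
      have hpow : (0:ℝ) < (N:ℝ) ^ (k+1) := by positivity
      calc f k = |((sA k : ℕ) : ℝ) - ((s k : ℕ) : ℝ)| / (N : ℝ) ^ (k + 1) := rfl
        _ ≤ ((N:ℝ) - 1) / (N : ℝ) ^ (k + 1) := by gcongr
        _ = g k := by
            show _ = (↑N - 1) * (↑N:ℝ)⁻¹ ^ (k + 1)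
            rw [inv_pow, div_eq_mul_inv]
    have hfsum : Summable f := Summable.of_nonneg_of_le hfnn hfg hgsum
    have hsplit := hfsum.sum_add_tsum_nat_add m
    have hzero : ∑ k ∈ Finset.range m, f k = 0 := by
      apply Finset.sum_eq_zero
      intro k hk
      rw [hf]
      simp [hs k (Finset.mem_range.mp hk)]
    have hds : dS N sA s = ∑' k, f (k + m) := by
      rw [dS, ← hsplit, hzero, zero_add]
    rw [hds]
    calc ∑' k, f (k + m) ≤ ∑' k, g (k + m) := by
          apply Summable.tsum_le_tsum (fun k => hfg (k + m))
          · exact (summable_nat_add_iff m).mpr hfsum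
          · exact (summable_nat_add_iff m).mpr hgsum
      _ < ε := hm

lemma dX_self (N : ℕ) (x : Fin N → Bool) : dX N x x = 0 := by
  simp [dX]


/-- `G` is topologically transitive on `(𝒳, dE)`: for any nonempty open sets
`U_A`, `U_B` there is `n₀ > 0` with `G^[n₀] '' U_A ∩ U_B ≠ ∅`. -/
theorem stmt5 (N : ℕ) (hN : 1 ≤ N)
    (UA UB : Set ((ℕ → Fin N) × (Fin N → Bool)))
    (hUA : IsOpenE N UA) (hUB : IsOpenE N UB)
    (hUAne : UA.Nonempty) (hUBne : UB.Nonempty) :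
    ∃ n₀ : ℕ, 0 < n₀ ∧ ((G N)^[n₀] '' UA ∩ UB).Nonempty := by
  obtain ⟨pA, hpA⟩ := hUAne
  obtain ⟨pB, hpB⟩ := hUBne
  obtain ⟨εA, hεA, hballA⟩ := hUA pA hpA
  obtain ⟨m, hm⟩ := dS_prefix N hN pA.1 εA hεA
  set sA : ℕ → Fin N := pA.1 with hsA
  set xA : Fin N → Bool := pA.2 with hxA
  set sB : ℕ → Fin N := pB.1 with hsB
  set xB : Fin N → Bool := pB.2 with hxB
  set xm : Fin N → Bool := ((G N)^[m] (sA, xA)).2 with hxm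
  set D : Finset (Fin N) := Finset.univ.filter (fun j => xm j ≠ xB j) with hD
  set z : Fin N := ⟨0, hN⟩ with hz
  set M : List (Fin N) := (List.range m).map sA ++ (D.toList ++ [z, z]) with hM
  set s : ℕ → Fin N := fun n =>
    if h : n < M.length then M.get ⟨n, h⟩ else sB (n - M.length) with hsdef
  have hlenM : m ≤ M.length := by
    rw [hM]; simp
  have hMpos : 0 < M.length := by
    rw [hM]; simp
  -- s agrees with sA on the first m entries
  have hag : ∀ k < m, s k = sA k := by
    intro k hk
    have hkM : k < M.length := lt_of_lt_of_le hk hlenM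
    rw [hsdef]
    simp only [hkM, dif_pos]
    have hkM' : k < ((List.range m).map sA ++ (D.toList ++ [z, z])).length := hkM
    have he : M.get ⟨k, hkM⟩ = ((List.range m).map sA ++ (D.toList ++ [z, z]))[k]'hkM' := rfl
    rw [he, List.getElem_append_left (by simpa using hk)]
    simp
  -- membership of the start point in UA
  have hstart : (s, xA) ∈ UA := by
    apply hballA
    have : dE N pA (s, xA) = dS N sA s + dX N xA xA := rfl
    rw [this, dX_self, add_zero]
    exact hm s hag
  -- the iterate lands exactly on pB
  have hmapM : (List.range M.length).map s = M := by
    apply List.ext_getElem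
    · simp
    · intro i h1 h2
      simp only [List.getElem_map, List.getElem_range]
      rw [hsdef]
      simp [h2]
  have hland : (G N)^[M.length] (s, xA) = pB := by
    rw [G_iterate, hmapM]
    refine Prod.ext ?_ ?_
    · funext k
      show s (k + M.length) = sB k
      rw [hsdef]
      simp
    · -- second components
      show applyL N M xA = xB
      funext j
      rw [applyL_count]
      have hxmj : xm j = xor (Nat.bodd (((List.range m).map sA).count j)) (xA j) := by
        rw [hxm, G_iterate N m sA xA]
        exact applyL_count N _ xA j
      have hcount : M.count j = ((List.range m).map sA).count j
          + (D.toList.count j + ([z, z] : List (Fin N)).count j) := by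
        rw [hM, List.count_append, List.count_append]
      have hDcount : D.toList.count j = if j ∈ D then 1 else 0 := by
        by_cases hj : j ∈ D
        · rw [if_pos hj]
          exact List.count_eq_one_of_mem D.nodup_toList (Finset.mem_toList.mpr hj)
        · rw [if_neg hj]
          exact List.count_eq_zero_of_not_mem (fun h => hj (Finset.mem_toList.mp h))
      have hzcount : ([z, z] : List (Fin N)).count j = if j = z then 2 else 0 := by
        by_cases hj : j = z <;> simp [List.count_cons, hj, @eq_comm _ z j]
      have hboddL : Nat.bodd (D.toList.count j + ([z, z] : List (Fin N)).count j)
          = decide (j ∈ D) := by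
        rw [hDcount, hzcount]
        split_ifs <;> simp_all
      rw [hcount, Nat.bodd_add, hboddL]
      have hred : xor (xor (Nat.bodd (((List.range m).map sA).count j)) (decide (j ∈ D))) (xA j)
          = xor (decide (j ∈ D)) (xm j) := by
        rw [hxmj]
        cases Nat.bodd (((List.range m).map sA).count j) <;>
          cases hdd : decide (j ∈ D) <;> cases xA j <;> rfl
      rw [hred]
      by_cases hj : xm j = xB j
      · have hjD : j ∉ D := by simp [hD, hj]
        simp [hjD, hj]
      · have hjD : j ∈ D := by simp [hD, hj]
        simp only [hjD, decide_eq_true_eq, decide_eq_true hjD, Bool.true_xor]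
        cases hx : xm j <;> cases hb : xB j <;> simp_all
  exact ⟨M.length, hMpos, ⟨pB, ⟨(s, xA), hstart, hland⟩, hpB⟩⟩
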